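/- Path abstraction is monotonically absorbing: for a finite set S with a ∈ S, if S₁ ⊆ S₂ ⊆ S, then for every substochastic DTMC M ∈ ℳ(S, a), abstracting first over S₁ and then over S₂ yields the same result as abstracting over S₂ directly: (M − S₁) − S₂ = M − S₂. -/
import Mathlib


open scoped ENNReal

namespace PA

variable {α : Type*}

/-- Block contraction auxiliary: `prev` records whether the previous letter was in `K`
(i.e., we are inside a `K`-block whose first letter was already kept). -/
def contractAux [DecidableEq α] (K : Finset α) : Bool → List α → List α
  | _, [] => []
  | prev, a :: x =>
    if a ∈ K then
      (if prev then contractAux K true x else a :: contractAux K true x)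
    else a :: contractAux K false x

/-- `contract K x` is `x − K`: every maximal nonempty factor of `x` consisting of
letters of `K` is replaced by its first letter. -/
def contract [DecidableEq α] (K : Finset α) (x : List α) : List α :=
  contractAux K false x

/-- `preim K x` is `x + K`, the preimage of `x` under `contract K`. -/
def preim [DecidableEq α] (K : Finset α) (x : List α) : Set (List α) :=
  {x' | contract K x' = x}

/-- `minPref L` is `L^≤`: the prefix-minimal elements of `L`. -/
def minPref (L : Set (List α)) : Set (List α) :=
  {x ∈ L | ∀ x', x' <+: x → x' ≠ x → x' ∉ L}

/-- Fusion concatenation: for `u` ending in `a` and `v` starting with `a`,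
`fuse u v` is `u ++ v` with one copy of the shared letter removed. -/
def fuse (u v : List α) : List α := u ++ v.tail

/-- Elementwise fusion of sets of words. -/
def setFuse (X Y : Set (List α)) : Set (List α) :=
  {z | ∃ u ∈ X, ∃ v ∈ Y, z = fuse u v}

/-- Probability mass of a set of words: sum of `P` over the prefix-minimal elements. -/
noncomputable def setP (P : List α → ℝ≥0∞) (R : Set (List α)) : ℝ≥0∞ :=
  ∑' x : minPref R, P x.1

/-- `P ∈ 𝒯(S)`: substochastic transition probability function on `S⁺`. -/
def IsTPF [Fintype α] (P : List α → ℝ≥0∞) : Prop :=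
  (∀ x, P x ≤ 1) ∧ (∀ s : α, P [s] = 1) ∧
  (∀ s : α, (∑ t : α, P [s, t]) ≤ 1) ∧
  (∀ (x y : List α) (s : α), P (x ++ s :: y) = P (x ++ [s]) * P (s :: y))

/-- `(K)₀^M`: the interior of `K` in the DTMC `(P, a)`: states of `K` other than `a`
with no incoming transition from outside `K`. -/
def interior [Fintype α] [DecidableEq α] (P : List α → ℝ≥0∞) (a : α) (K : Finset α) :
    Set α :=
  {s | s ∈ K ∧ s ≠ a ∧ (∑ t ∈ Kᶜ, P [t, s]) = 0}

open Classical in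
noncomputable def abstr [Fintype α] [DecidableEq α]
    (P : List α → ℝ≥0∞) (a : α) (K : Finset α) : List α → ℝ≥0∞ :=
  fun x =>
    if x.length = 1 then 1
    else if 2 ≤ x.length ∧ ∃ s ∈ x, s ∈ interior P a K then 0
    else setP P (preim K x)

open Classical in
noncomputable def OutSet [Fintype α] (P : List α → ℝ≥0∞) (S₁ : Finset α) : Finset α :=
  Finset.univ.filter fun t => t ∉ S₁ ∧ 0 < ∑ s ∈ S₁, P [s, t]

open Classical in
noncomputable def USet [Fintype α] (P : List α → ℝ≥0∞) (S₁ : Finset α) : Finset α :=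
  Finset.univ.filter fun r => r ∈ S₁ ∧
    0 < setP P {x | ∃ (w : List α) (t : α),
      x = r :: (w ++ [t]) ∧ (∀ c ∈ w, c ∈ S₁) ∧ t ∈ OutSet P S₁}

open Classical in
noncomputable def U1Set [Fintype α] (P : List α → ℝ≥0∞) (S₁ : Finset α) : Finset α :=
  Finset.univ.filter fun r => r ∈ S₁ ∧ 0 < ∑ t ∈ OutSet P S₁, P [r, t]

end PA

set_option linter.unusedSectionVars false

namespace PAx
open PA

variable {α : Type*} [DecidableEq α] {K L : Finset α}

lemma ca_cons (K : Finset α) (p : Bool) (b : α) (w : List α) :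
    contractAux K p (b :: w) =
      (if b ∈ K ∧ p then [] else [b]) ++ contractAux K (decide (b ∈ K)) w := by
  by_cases hb : b ∈ K <;> cases p <;> simp [contractAux, hb]

def stE (K : Finset α) (p : Bool) (u : List α) : Bool :=
  u.foldl (fun _ b => decide (b ∈ K)) p

@[simp] lemma stE_nil (p : Bool) : stE K p [] = p := rfl

lemma stE_cons (p : Bool) (b : α) (u : List α) :
    stE K p (b :: u) = stE K (decide (b ∈ K)) u := rfl

@[simp] lemma stE_concat (p : Bool) (u : List α) (b : α) :
    stE K p (u ++ [b]) = decide (b ∈ K) := by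
  simp [stE, List.foldl_append]

lemma ca_append (K : Finset α) : ∀ (u : List α) (p : Bool) (v : List α),
    contractAux K p (u ++ v) = contractAux K p u ++ contractAux K (stE K p u) v
  | [], p, v => rfl
  | b :: u, p, v => by
    rw [List.cons_append, ca_cons, ca_cons, ca_append K u, stE_cons, List.append_assoc]

lemma ca_singleton (K : Finset α) (p : Bool) (b : α) :
    contractAux K p [b] = if b ∈ K ∧ p then [] else [b] := by
  rw [ca_cons]; simp [contractAux]

lemma eq_nil_of_ca (K : Finset α) : ∀ (p : Bool) (v : List α),
    contractAux K p v = [] → v = [] ∨ (p = true ∧ ∀ b ∈ v, b ∈ K)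
  | p, [], _ => Or.inl rfl
  | p, b :: w, h => by
    rw [ca_cons] at h
    rcases List.append_eq_nil_iff.mp h with ⟨h1, h2⟩
    have hb : b ∈ K ∧ p := by by_contra hc; rw [if_neg hc] at h1; simp at h1
    right
    refine ⟨by simpa using hb.2, ?_⟩
    have : decide (b ∈ K) = true := by simpa using hb.1
    rcases eq_nil_of_ca K _ w h2 with rfl | ⟨hp, hall⟩
    · intro c hc; rcases List.mem_singleton.mp hc with rfl; exact hb.1
    · intro c hc
      rcases List.mem_cons.mp hc with rfl | hc
      · exact hb.1
      · exact hall c hc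

lemma stE_true {u : List α} (h : stE K false u = true) :
    ∃ w b, u = w ++ [b] ∧ b ∈ K := by
  induction u using List.reverseRecOn with
  | nil => simp at h
  | append_singleton w b _ => exact ⟨w, b, rfl, by simpa using h⟩

lemma last_mem : ∀ {u : List α}, stE K false u = true →
    ∃ w d, contractAux K false u = w ++ [d] ∧ d ∈ K := by
  intro u
  induction u using List.reverseRecOn with
  | nil => simp
  | append_singleton w b ih =>
    intro h
    have hb : b ∈ K := by simpa using h
    rw [ca_append, ca_singleton]
    rcases hst : stE K false w with _ | _
    · exact ⟨contractAux K false w, b, by simp [hb, hst], hb⟩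
    · rcases ih hst with ⟨w', d, hw, hd⟩
      exact ⟨w', d, by simp [hb, hst, hw], hd⟩

lemma length_ca (K : Finset α) : ∀ (p : Bool) (v : List α),
    (contractAux K p v).length ≤ v.length
  | p, [] => le_refl _
  | p, b :: w => by
    rw [ca_cons]
    have := length_ca K (decide (b ∈ K)) w
    by_cases hb : b ∈ K ∧ p = true
    · simp only [if_pos hb]; simp; omega
    · simp only [if_neg hb]; simp; omega

def Bad (K : Finset α) (y : List α) : Prop :=
  ∃ u b c, y = u ++ [b, c] ∧ b ∈ K ∧ c ∈ K

lemma Bad.mono (hKL : K ⊆ L) {y : List α} (h : Bad K y) : Bad L y := by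
  rcases h with ⟨u, b, c, rfl, hb, hc⟩
  exact ⟨u, b, c, rfl, hKL hb, hKL hc⟩

lemma contract_eq_nil {y : List α} (h : contract K y = []) : y = [] := by
  rcases eq_nil_of_ca K false y h with rfl | ⟨hp, _⟩
  · rfl
  · simp at hp

lemma contract_cons (K : Finset α) (b : α) (w : List α) :
    contract K (b :: w) = b :: contractAux K (decide (b ∈ K)) w := by
  rw [contract, ca_cons]; simp

@[simp] lemma contract_def (K : Finset α) (u : List α) :
    contract K u = contractAux K false u := rfl

lemma ca_ca (hKL : K ⊆ L) : ∀ (z : List α) (p q : Bool), (q = true → p = true) →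
    contractAux L p (contractAux K q z) = contractAux L p z
  | [], _, _, _ => rfl
  | b :: z, p, q, hpq => by
    by_cases hbK : b ∈ K
    · have hbL : b ∈ L := hKL hbK
      cases q with
      | false =>
        have h1 : contractAux K false (b :: z) = b :: contractAux K true z := by
          simp [contractAux, hbK]
        rw [h1]
        cases p with
        | false =>
          simp only [contractAux, if_pos hbL, if_pos hbK, if_neg Bool.false_ne_true,
            Bool.false_eq_true, if_false]
          rw [ca_ca hKL z true true (fun h => h)]
        | true =>
          simp only [contractAux, if_pos hbL, if_pos hbK, if_true]
          rw [ca_ca hKL z true true (fun h => h)]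
      | true =>
        have hp : p = true := hpq rfl
        subst hp
        have h1 : contractAux K true (b :: z) = contractAux K true z := by
          simp [contractAux, hbK]
        have h2 : contractAux L true (b :: z) = contractAux L true z := by
          simp [contractAux, hbL]
        rw [h1, h2, ca_ca hKL z true true (fun h => h)]
    · have h1 : ∀ q', contractAux K q' (b :: z) = b :: contractAux K false z := by
        intro q'; simp [contractAux, hbK]
      rw [h1]
      by_cases hbL : b ∈ L
      · cases p with
        | false =>
          simp only [contractAux, if_pos hbL, Bool.false_eq_true, if_false]
          rw [ca_ca hKL z true false (by simp)]
        | true =>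
          simp only [contractAux, if_pos hbL, if_true]
          rw [ca_ca hKL z true false (by simp)]
      · simp only [contractAux, if_neg hbL]
        rw [ca_ca hKL z false false (fun h => h)]

lemma contract_contract (hKL : K ⊆ L) (z : List α) :
    contract L (contract K z) = contract L z :=
  ca_ca hKL z false false (fun h => h)

lemma minPref_preim_iff {x y : List α} :
    y ∈ minPref (preim K x) ↔ contract K y = x ∧ ¬ Bad K y := by
  constructor
  · rintro ⟨h1, h2⟩
    refine ⟨h1, ?_⟩
    rintro ⟨u, b, c, rfl, hb, hc⟩
    have hpre : u ++ [b] <+: u ++ [b, c] := ⟨[c], by simp⟩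
    have hne : u ++ [b] ≠ u ++ [b, c] := by simp
    apply h2 (u ++ [b]) hpre hne
    show contract K (u ++ [b]) = x
    rw [← h1]
    have heq : u ++ [b, c] = (u ++ [b]) ++ [c] := by simp
    have h3 : contract K ((u ++ [b]) ++ [c]) = contract K (u ++ [b]) := by
      rw [contract_def, contract_def, ca_append K (u ++ [b]), ca_singleton]
      simp [hc, hb]
    rw [heq, h3]
  · rintro ⟨h1, h2⟩
    refine ⟨h1, ?_⟩
    rintro y' ⟨v, rfl⟩ hne hmem
    have hv : v ≠ [] := by rintro rfl; simp at hne
    have hx' : contract K y' = x := hmem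
    have hsplit : contract K (y' ++ v)
        = contract K y' ++ contractAux K (stE K false y') v := by
      rw [contract_def, ca_append]; rfl
    have hnil : contractAux K (stE K false y') v = [] := by
      have : contract K y' ++ contractAux K (stE K false y') v = contract K y' ++ [] := by
        rw [← hsplit, h1, hx']; simp
      exact List.append_cancel_left this
    rcases eq_nil_of_ca K _ v hnil with rfl | ⟨hst, hall⟩
    · exact hv rfl
    · rcases stE_true hst with ⟨w, b, rfl, hbK⟩
      apply h2
      rcases v.eq_nil_or_concat' with rfl | ⟨v', c, rfl⟩
      · exact absurd rfl hv
      · have hcK : c ∈ K := hall c (by simp)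
        rcases v'.eq_nil_or_concat' with rfl | ⟨v'', c₂, rfl⟩
        · exact ⟨w, b, c, by simp, hbK, hcK⟩
        · have hc2 : c₂ ∈ K := hall c₂ (by simp)
          exact ⟨(w ++ [b]) ++ v'', c₂, c, by simp, hc2, hcK⟩

lemma bad_lift (hKL : K ⊆ L) {z : List α} (h : Bad L z) :
    Bad K z ∨ Bad L (contract K z) := by
  rcases h with ⟨u, b, c, rfl, hbL, hcL⟩
  by_cases hcK : c ∈ K
  · by_cases hbK : b ∈ K
    · exact Or.inl ⟨u, b, c, rfl, hbK, hcK⟩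
    · right
      have : contract K (u ++ [b, c]) = contract K u ++ [b, c] := by
        have h1 : (u ++ [b, c]) = (u ++ [b]) ++ [c] := by simp
        rw [h1, contract_def, ca_append, ca_append, ca_singleton, ca_singleton]
        simp [hbK, hcK]
      exact ⟨contract K u, b, c, this.symm ▸ rfl, hbL, hcL⟩
  · right
    have h1 : (u ++ [b, c]) = (u ++ [b]) ++ [c] := by simp
    have hc' : contract K (u ++ [b, c]) = contract K (u ++ [b]) ++ [c] := by
      rw [h1, contract_def, contract_def, ca_append, ca_singleton]
      simp [hcK]
    have : ∃ w d, contract K (u ++ [b]) = w ++ [d] ∧ d ∈ L := by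
      by_cases hbK : b ∈ K
      · rcases hst : stE K false u with _ | _
        · refine ⟨contractAux K false u, b, ?_, hbL⟩
          rw [contract_def, ca_append, ca_singleton]; simp [hbK, hst]
        · rcases last_mem hst with ⟨w, d, hw, hd⟩
          refine ⟨w, d, ?_, hKL hd⟩
          rw [contract_def, ca_append, ca_singleton]; simp [hbK, hst]; exact hw
      · refine ⟨contract K u, b, ?_, hbL⟩
        rw [contract_def, contract_def, ca_append, ca_singleton]; simp [hbK]
    rcases this with ⟨w, d, hw, hdL⟩
    exact ⟨w, d, c, by rw [hc', hw]; simp, hdL, hcL⟩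

lemma bad_pull (hKL : K ⊆ L) {z : List α} (h : Bad L (contract K z)) : Bad L z := by
  rcases h with ⟨u₀, d, c, hy, hdL, hcL⟩
  rcases z.eq_nil_or_concat' with rfl | ⟨z', e, rfl⟩
  · simp [contract, contractAux] at hy
  · have hz : contract K (z' ++ [e])
        = contract K z' ++ contractAux K (stE K false z') [e] := by
      rw [contract, ca_append]; rfl
    by_cases hE : e ∈ K ∧ stE K false z' = true
    · rcases stE_true hE.2 with ⟨z'', b, rfl, hbK⟩
      exact ⟨z'', b, e, by simp, hKL hbK, hKL hE.1⟩
    · have he : contractAux K (stE K false z') [e] = [e] := by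
        rw [ca_singleton, if_neg]
        exact fun hc => hE ⟨hc.1, hc.2⟩
      rw [hz, he] at hy
      have hy2 : contract K z' ++ [e] = (u₀ ++ [d]) ++ [c] := by rw [hy]; simp
      have hec : e = c ∧ contract K z' = u₀ ++ [d] := by
        have h1 := List.append_inj' hy2 rfl
        exact ⟨by simpa using h1.2, h1.1⟩
      rcases z'.eq_nil_or_concat' with rfl | ⟨z'', b, rfl⟩
      · simp [contract, contractAux] at hec
      · have hbL : b ∈ L := by
          by_cases hbK : b ∈ K
          · exact hKL hbK
          · have : contract K (z'' ++ [b]) = contract K z'' ++ [b] := by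
              rw [contract_def, contract_def, ca_append, ca_singleton]; simp [hbK]
            rw [this] at hec
            have := List.append_inj' hec.2 rfl
            have hb : b = d := by simpa using this.2
            exact hb ▸ hdL
        exact ⟨z'', b, e, by simp, hbL, hec.1 ▸ hcL⟩

lemma mem_ca_split {s : α} (hs : s ∈ K) : ∀ (p : Bool) (z : List α),
    s ∈ contractAux K p z →
    ∃ u v, z = u ++ s :: v ∧ ((u = [] ∧ p = false) ∨ ∃ u' t, u = u' ++ [t] ∧ t ∉ K)
  | p, [], h => by simp [contractAux] at h
  | p, b :: w, h => by
    by_cases hbK : b ∈ K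
    · cases p with
      | true =>
        have h1 : contractAux K true (b :: w) = contractAux K true w := by
          simp [contractAux, hbK]
        rw [h1] at h
        rcases mem_ca_split hs true w h with ⟨u, v, rfl, hu⟩
        rcases hu with ⟨_, hpf⟩ | ⟨u', t, rfl, ht⟩
        · simp at hpf
        · exact ⟨b :: (u' ++ [t]), v, by simp, Or.inr ⟨b :: u', t, by simp, ht⟩⟩
      | false =>
        have h1 : contractAux K false (b :: w) = b :: contractAux K true w := by
          simp [contractAux, hbK]
        rw [h1] at h
        rcases List.mem_cons.mp h with rfl | h
        · exact ⟨[], w, rfl, Or.inl ⟨rfl, rfl⟩⟩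
        · rcases mem_ca_split hs true w h with ⟨u, v, rfl, hu⟩
          rcases hu with ⟨_, hpf⟩ | ⟨u', t, rfl, ht⟩
          · simp at hpf
          · exact ⟨b :: (u' ++ [t]), v, by simp, Or.inr ⟨b :: u', t, by simp, ht⟩⟩
    · have h1 : contractAux K p (b :: w) = b :: contractAux K false w := by
        simp [contractAux, hbK]
      rw [h1] at h
      rcases List.mem_cons.mp h with rfl | h
      · exact absurd hs hbK
      · rcases mem_ca_split hs false w h with ⟨u, v, rfl, hu⟩
        rcases hu with ⟨rfl, _⟩ | ⟨u', t, rfl, ht⟩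
        · exact ⟨[b], v, rfl, Or.inr ⟨[], b, rfl, hbK⟩⟩
        · exact ⟨b :: (u' ++ [t]), v, by simp, Or.inr ⟨b :: u', t, by simp, ht⟩⟩

end PAx

namespace Part2
open PA PAx

variable {α : Type*} [Fintype α] [DecidableEq α] {S₁ S₂ : Finset α}

lemma interior_mono (P : List α → ℝ≥0∞) (a : α) (h : S₁ ⊆ S₂) :
    interior P a S₁ ⊆ interior P a S₂ := by
  rintro s ⟨hs1, hsa, hsum⟩
  refine ⟨h hs1, hsa, Finset.sum_eq_zero fun t ht => ?_⟩
  exact (Finset.sum_eq_zero_iff.mp hsum) t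
    (Finset.compl_subset_compl.mpr h ht)

lemma minPref_pair {t s : α} (ht : t ∉ S₁) :
    minPref (preim S₁ [t, s]) = {[t, s]} := by
  have hdt : decide (t ∈ S₁) = false := by simpa using ht
  ext y
  rw [Set.mem_singleton_iff, minPref_preim_iff]
  constructor
  · rintro ⟨h1, h2⟩
    rcases y with _ | ⟨b, w⟩
    · simp [contractAux] at h1
    · rw [contract_cons] at h1
      obtain ⟨rfl, hw⟩ := List.cons_eq_cons.mp h1
      rw [hdt] at hw
      rcases w with _ | ⟨s', w'⟩
      · simp [contractAux] at hw
      · rw [ca_cons] at hw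
        simp only [Bool.false_eq_true, and_false, if_false, List.singleton_append] at hw
        obtain ⟨rfl, hw'⟩ := List.cons_eq_cons.mp hw
        rcases eq_nil_of_ca S₁ _ w' hw' with rfl | ⟨hp, hall⟩
        · rfl
        · have hsK : s' ∈ S₁ := by simpa using hp
          rcases w'.eq_nil_or_concat' with rfl | ⟨w'', c, rfl⟩
          · rfl
          · exfalso
            have hcK : c ∈ S₁ := hall c (by simp)
            rcases w''.eq_nil_or_concat' with rfl | ⟨w₃, c₂, rfl⟩
            · exact h2 ⟨[b], s', c, by simp, hsK, hcK⟩
            · exact h2 ⟨b :: s' :: w₃, c₂, c, by simp, hall c₂ (by simp), hcK⟩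
  · rintro rfl
    constructor
    · rw [contract_cons, hdt, ca_cons]
      simp [contractAux]
    · rintro ⟨u, b, c, huv, hb, hc⟩
      rcases u with _ | ⟨a', u'⟩
      · simp only [List.nil_append] at huv
        obtain ⟨rfl, h2⟩ := List.cons_eq_cons.mp huv
        exact ht hb
      · apply_fun List.length at huv
        simp at huv

open Classical in
lemma abstr_pair (P : List α → ℝ≥0∞) (a : α) {t s : α} (ht : t ∉ S₁) :
    abstr P a S₁ [t, s] = if s ∈ PA.interior P a S₁ then 0 else P [t, s] := by
  rw [abstr]
  rw [if_neg (by simp)]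
  by_cases hs : s ∈ PA.interior P a S₁
  · rw [if_pos ⟨by simp, ⟨s, by simp, hs⟩⟩, if_pos hs]
  · rw [if_neg, if_neg hs]
    · rw [setP]
      rw [show minPref (preim S₁ [t, s]) = {[t, s]} from minPref_pair ht]
      exact tsum_singleton _ _
    · rintro ⟨-, r, hr, hrint⟩
      have : r ∈ S₁ := hrint.1
      rcases List.mem_cons.mp hr with rfl | hr
      · exact ht this
      · rcases List.mem_singleton.mp (by simpa using hr) with rfl
        exact hs hrint

open Classical in
lemma interior_abstr (P : List α → ℝ≥0∞) (a : α) (h : S₁ ⊆ S₂) :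
    PA.interior (abstr P a S₁) a S₂ = PA.interior P a S₂ := by
  ext s
  simp only [PA.interior, Set.mem_setOf_eq]
  refine and_congr_right fun hs2 => and_congr_right fun hsa => ?_
  have hterm : ∀ t ∈ S₂ᶜ, abstr P a S₁ [t, s]
      = if s ∈ PA.interior P a S₁ then 0 else P [t, s] := by
    intro t ht
    exact abstr_pair P a fun hts => (Finset.mem_compl.mp ht) (h hts)
  by_cases hs : s ∈ PA.interior P a S₁
  · have h1 : ∑ t ∈ S₂ᶜ, abstr P a S₁ [t, s] = 0 :=
      Finset.sum_eq_zero fun t ht => by rw [hterm t ht, if_pos hs]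
    have h2 : ∑ t ∈ S₂ᶜ, P [t, s] = 0 :=
      Finset.sum_eq_zero fun t ht => (Finset.sum_eq_zero_iff.mp hs.2.2) t
        (Finset.compl_subset_compl.mpr h ht)
    simp [h1, h2]
  · have h1 : ∑ t ∈ S₂ᶜ, abstr P a S₁ [t, s] = ∑ t ∈ S₂ᶜ, P [t, s] :=
      Finset.sum_congr rfl fun t ht => by rw [hterm t ht, if_neg hs]
    rw [h1]

lemma P_zero_or_head {P : List α → ℝ≥0∞} {a : α} (hP : IsTPF P) {s : α}
    (hs : s ∈ PA.interior P a S₁) {z : List α} (hmem : s ∈ contract S₁ z) :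
    (∃ v, z = s :: v) ∨ P z = 0 := by
  have hsK : s ∈ S₁ := hs.1
  rcases mem_ca_split hsK false z hmem with ⟨u, v, rfl, hu⟩
  rcases hu with ⟨rfl, -⟩ | ⟨u', t, rfl, ht⟩
  · exact Or.inl ⟨v, rfl⟩
  · right
    have h1 : u' ++ [t] ++ s :: v = u' ++ t :: (s :: v) := by simp
    rw [h1, hP.2.2.2 u' (s :: v) t]
    have h2 : (t :: s :: v : List α) = [t] ++ s :: v := rfl
    rw [h2, hP.2.2.2 [t] v s]
    have h3 : P ([t] ++ [s]) = 0 :=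
      (Finset.sum_eq_zero_iff.mp hs.2.2) t (Finset.mem_compl.mpr ht)
    rw [show ([t] ++ [s] : List α) = [t, s] from rfl] at h3
    rw [show ([t] ++ [s] : List α) = [t, s] from rfl, h3]
    simp

lemma abstr_eq_tsum {P : List α → ℝ≥0∞} {a : α} (hP : IsTPF P) (h : S₁ ⊆ S₂)
    {x y : List α} (hx : ∀ s ∈ x, s ∉ PA.interior P a S₂)
    (hy : y ∈ minPref (preim S₂ x)) (hxlen : x.length ≠ 1) :
    abstr P a S₁ y = ∑' z : minPref (preim S₁ y), P z.1 := by
  have hyx : contract S₂ y = x := (minPref_preim_iff.mp hy).1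
  have hylen : y.length ≠ 1 := by
    intro h1
    have hle : x.length ≤ y.length := hyx ▸ length_ca S₂ false y
    have : x.length = 0 := by omega
    have hx0 : x = [] := List.length_eq_zero_iff.mp this
    have : y = [] := contract_eq_nil (hx0 ▸ hyx)
    rw [this] at h1; simp at h1
  rw [abstr, if_neg hylen]
  by_cases hhit : ∃ s ∈ y, s ∈ PA.interior P a S₁
  · obtain ⟨s, hsy, hsint⟩ := hhit
    have hy2 : 2 ≤ y.length := by
      have : y ≠ [] := by rintro rfl; simp at hsy
      have := List.length_pos_iff.mpr this
      omega
    rw [if_pos ⟨hy2, s, hsy, hsint⟩]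
    symm
    rw [ENNReal.tsum_eq_zero]
    rintro ⟨z, hz⟩
    have hzy : contract S₁ z = y := (minPref_preim_iff.mp hz).1
    rcases P_zero_or_head hP hsint (hzy ▸ hsy) with ⟨v, rfl⟩ | hPz
    · exfalso
      have hyhead : ∃ w, y = s :: w := by
        rw [← hzy, contract_cons]; exact ⟨_, rfl⟩
      obtain ⟨w, rfl⟩ := hyhead
      have hxhead : ∃ w', x = s :: w' := by
        rw [← hyx, contract_cons]; exact ⟨_, rfl⟩
      obtain ⟨w', rfl⟩ := hxhead
      exact hx s (by simp) (interior_mono P a h hsint)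
    · exact hPz
  · rw [if_neg (fun hc => hhit hc.2)]
    rfl


lemma setP_abstr {P : List α → ℝ≥0∞} {a : α} (hP : IsTPF P) (h : S₁ ⊆ S₂)
    {x : List α} (hx : ∀ s ∈ x, s ∉ PA.interior P a S₂) (hxlen : x.length ≠ 1) :
    setP (abstr P a S₁) (preim S₂ x) = setP P (preim S₂ x) := by
  rw [setP, setP]
  have step1 : ∑' y : minPref (preim S₂ x), abstr P a S₁ y.1
      = ∑' y : minPref (preim S₂ x), ∑' z : minPref (preim S₁ y.1), P z.1 :=
    tsum_congr fun y => abstr_eq_tsum hP h hx y.2 hxlen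
  rw [step1]
  rw [← ENNReal.tsum_sigma (fun (y : minPref (preim S₂ x)) (z : minPref (preim S₁ y.1)) => P z.1)]
  let e : (Σ y : minPref (preim S₂ x), minPref (preim S₁ y.1)) ≃ minPref (preim S₂ x) :=
    { toFun := fun p => ⟨p.2.1, by
        obtain ⟨hyx, hBy⟩ := minPref_preim_iff.mp p.1.2
        obtain ⟨hzy, hBz⟩ := minPref_preim_iff.mp p.2.2
        refine minPref_preim_iff.mpr ⟨?_, ?_⟩
        · rw [← contract_contract h p.2.1, hzy, hyx]
        · intro hb
          rcases bad_lift h hb with hb1 | hb2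
          · exact hBz hb1
          · rw [hzy] at hb2; exact hBy hb2⟩
      invFun := fun z => ⟨⟨contract S₁ z.1, by
          obtain ⟨hzx, hBz⟩ := minPref_preim_iff.mp z.2
          refine minPref_preim_iff.mpr ⟨?_, ?_⟩
          · rw [contract_contract h z.1, hzx]
          · intro hb; exact hBz (bad_pull h hb)⟩,
        ⟨z.1, by
          obtain ⟨hzx, hBz⟩ := minPref_preim_iff.mp z.2
          exact minPref_preim_iff.mpr ⟨rfl, fun hb => hBz (hb.mono h)⟩⟩⟩
      left_inv := fun p => by
        obtain ⟨⟨y, hy⟩, ⟨z, hz⟩⟩ := p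
        have hzy : contract S₁ z = y := (minPref_preim_iff.mp hz).1
        subst hzy
        rfl
      right_inv := fun z => rfl }
  exact e.tsum_eq (fun z => P z.1)

end Part2

open scoped ENNReal in
/-- monotonic absorption: for `S₁ ⊆ S₂`, `(M − S₁) − S₂ = M − S₂`. -/
theorem abstr_abstr {α : Type*} [Fintype α] [DecidableEq α]
    (a : α) (S₁ S₂ : Finset α) (h : S₁ ⊆ S₂)
    (P : List α → ℝ≥0∞) (hP : PA.IsTPF P) :
    PA.abstr (PA.abstr P a S₁) a S₂ = PA.abstr P a S₂ := by
  funext x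
  rw [PA.abstr, PA.abstr]
  by_cases hx1 : x.length = 1
  · rw [if_pos hx1, if_pos hx1]
  · rw [if_neg hx1, if_neg hx1]
    rw [Part2.interior_abstr P a h]
    by_cases hhit : 2 ≤ x.length ∧ ∃ s ∈ x, s ∈ PA.interior P a S₂
    · rw [if_pos hhit, if_pos hhit]
    · rw [if_neg hhit, if_neg hhit]
      have hx : ∀ s ∈ x, s ∉ PA.interior P a S₂ := by
        intro s hs hint
        apply hhit
        refine ⟨?_, s, hs, hint⟩
        have : x ≠ [] := by rintro rfl; simp at hs
        have := List.length_pos_iff.mpr this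
        omega
      exact Part2.setP_abstr hP h hx hx1
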